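/- A smallest cycle containing a given edge e of a graph G is a min-cycle: for every pair of vertices u, v on the cycle C, the shorter of the two paths between u and v along C has length equal to d_G(u, v). -/

import Mathlib

open SimpleGraph

/-- Lift a walk of `G` whose `toSubgraph` lies inside `H` to a walk of `H.coe`. -/
private lemma lift_walk {V : Type*} {G : SimpleGraph V} {H : G.Subgraph} :
    ∀ {a b : V} (p : G.Walk a b), p.toSubgraph ≤ H →
      ∀ (ha : a ∈ H.verts) (hb : b ∈ H.verts),
      ∃ q : H.coe.Walk ⟨a, ha⟩ ⟨b, hb⟩, q.length = p.length := by
  intro a b p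
  induction p with
  | nil => intro _ ha hb; exact ⟨SimpleGraph.Walk.nil, rfl⟩
  | @cons a c b h p ih =>
    intro hle ha hb
    have hle' : p.toSubgraph ≤ H := le_trans le_sup_right hle
    have hc : c ∈ H.verts := hle'.1 (p.start_mem_verts_toSubgraph)
    have hadj : H.Adj a c := hle.2 (by simp)
    obtain ⟨q, hq⟩ := ih hle' hc hb
    exact ⟨SimpleGraph.Walk.cons (by exact hadj : H.coe.Adj ⟨a, ha⟩ ⟨c, hc⟩) q,
      congrArg (· + 1) hq⟩

private lemma dist_coe_le {V : Type*} {G : SimpleGraph V} {H : G.Subgraph}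
    {a b : V} (p : G.Walk a b) (hle : p.toSubgraph ≤ H)
    (ha : a ∈ H.verts) (hb : b ∈ H.verts) :
    H.coe.dist ⟨a, ha⟩ ⟨b, hb⟩ ≤ p.length := by
  obtain ⟨q, hq⟩ := lift_walk p hle ha hb
  calc H.coe.dist ⟨a, ha⟩ ⟨b, hb⟩ ≤ q.length := SimpleGraph.dist_le q
    _ = p.length := hq

/-- Split a walk at an edge which occurs exactly once on it. -/
private lemma edge_split {V : Type*} [DecidableEq V] {G : SimpleGraph V} {e : Sym2 V} :
    ∀ {a b : V} (p : G.Walk a b), List.count e p.edges = 1 →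
    ∃ (x y : V) (h : G.Adj x y) (r1 : G.Walk a x) (r2 : G.Walk y b),
      s(x, y) = e ∧ e ∉ r1.edges ∧ e ∉ r2.edges ∧
      r1.length + 1 + r2.length = p.length := by
  intro a b p
  induction p with
  | nil => simp
  | @cons a c b h p ih =>
    intro hcount
    rw [SimpleGraph.Walk.edges_cons, List.count_cons] at hcount
    by_cases hce : s(a, c) = e
    · have h0 : List.count e p.edges = 0 := by
        simp [hce] at hcount; omega
      refine ⟨a, c, h, SimpleGraph.Walk.nil, p, hce, by simp, ?_, by simp [Nat.add_comm]⟩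
      exact List.count_eq_zero.mp h0
    · have h1 : List.count e p.edges = 1 := by
        simp [hce] at hcount; omega
      obtain ⟨x, y, hxy, r1, r2, hse, he1, he2, hlen⟩ := ih h1
      refine ⟨x, y, hxy, SimpleGraph.Walk.cons h r1, r2, hse, ?_, he2, by
        simp only [SimpleGraph.Walk.length_cons]; omega⟩
      simp only [SimpleGraph.Walk.edges_cons, List.mem_cons]
      rintro (rfl | hmem)
      · exact hce rfl
      · exact he1 hmem

/-- A closed walk containing an edge exactly once contains a cycle through that edge
of no greater length. -/
private lemma cycle_of_closed_walk {V : Type*} [DecidableEq V] {G : SimpleGraph V}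
    {e : Sym2 V} {u : V} (W : G.Walk u u) (hW : List.count e W.edges = 1) :
    ∃ (b : V) (D : G.Walk b b), D.IsCycle ∧ e ∈ D.edges ∧ D.length ≤ W.length := by
  obtain ⟨x, y, h, r1, r2, hse, he1, he2, hlen⟩ := edge_split W hW
  set Z : G.Walk y x := r2.append r1 with hZ
  have heZ : e ∉ Z.edges := by
    rw [hZ, SimpleGraph.Walk.edges_append]
    simp only [List.mem_append]
    rintro (h' | h') <;> [exact he2 h'; exact he1 h']
  set Q := Z.bypass with hQ
  have hQpath : Q.IsPath := Z.bypass_isPath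
  have heQ : e ∉ Q.edges := fun hmem => heZ (Z.edges_bypass_subset hmem)
  refine ⟨x, SimpleGraph.Walk.cons h Q, ?_, ?_, ?_⟩
  · rw [SimpleGraph.Walk.cons_isCycle_iff]
    exact ⟨hQpath, by rw [hse]; exact heQ⟩
  · rw [SimpleGraph.Walk.edges_cons, hse]; exact List.mem_cons_self
  · have h1 : Q.length ≤ Z.length := Z.length_bypass_le
    have h2 : Z.length = r2.length + r1.length := SimpleGraph.Walk.length_append _ _
    simp only [SimpleGraph.Walk.length_cons]
    omega

/-- If `A ++ B` is an arrangement of a minimal cycle through `e` with `e` on `B`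
(exactly once), and `P` is any `u`-`w` walk avoiding `e`, then `A` is at most as long
as `P`. -/
private lemma arc_bound {V : Type*} [DecidableEq V] {G : SimpleGraph V} {e : Sym2 V}
    {a : V} {C : G.Walk a a}
    (hmin : ∀ (b : V) (C' : G.Walk b b), C'.IsCycle → e ∈ C'.edges →
      C.length ≤ C'.length)
    {u w : V} (A : G.Walk u w) (B : G.Walk w u)
    (hsum : A.length + B.length = C.length)
    (heB : List.count e B.edges = 1)
    (P : G.Walk u w) (heP : e ∉ P.edges) :
    A.length ≤ P.length := by
  by_contra hlt
  push_neg at hlt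
  set W : G.Walk u u := P.append B with hWdef
  have hcount : List.count e W.edges = 1 := by
    rw [hWdef, SimpleGraph.Walk.edges_append, List.count_append,
      List.count_eq_zero.mpr heP, heB]
  obtain ⟨b, D, hD, heD, hlenD⟩ := cycle_of_closed_walk W hcount
  have hCle := hmin b D hD heD
  have hWlen : W.length = P.length + B.length := SimpleGraph.Walk.length_append _ _
  omega

private lemma key_lemma {V : Type*} [DecidableEq V] (G : SimpleGraph V)
    (a : V) (C : G.Walk a a) (hC : C.IsCycle) (e : Sym2 V) (he : e ∈ C.edges)
    (hmin : ∀ (b : V) (C' : G.Walk b b), C'.IsCycle → e ∈ C'.edges →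
      C.length ≤ C'.length) :
    ∀ (n : ℕ) (u w : V) (hu : u ∈ C.toSubgraph.verts) (hw : w ∈ C.toSubgraph.verts),
      G.dist u w ≤ n → C.toSubgraph.coe.dist ⟨u, hu⟩ ⟨w, hw⟩ ≤ G.dist u w := by
  intro n
  induction n using Nat.strong_induction_on with
  | _ n ih =>
  intro u w hu hw hn
  have hconn : C.toSubgraph.Connected := C.toSubgraph_connected
  by_cases huw : u = w
  · subst huw
    simp [SimpleGraph.dist_self]
  -- u and w are reachable in G
  have hreach_coe : C.toSubgraph.coe.Reachable ⟨u, hu⟩ ⟨w, hw⟩ :=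
    hconn.coe.preconnected ⟨u, hu⟩ ⟨w, hw⟩
  have hreach : G.Reachable u w := by
    obtain ⟨q⟩ := hreach_coe
    exact ⟨q.map C.toSubgraph.hom⟩
  obtain ⟨P', hP'len⟩ := hreach.exists_walk_length_eq_dist
  set P := P'.bypass with hPdef
  have hPpath : P.IsPath := P'.bypass_isPath
  have hPlen : P.length = G.dist u w := by
    have h1 : P.length ≤ P'.length := P'.length_bypass_le
    have h2 : G.dist u w ≤ P.length := SimpleGraph.dist_le P
    omega
  by_cases hePc : e ∈ P.edges
  · -- e lies on the shortest path; split at e and use induction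
    have hcnt : List.count e P.edges = 1 := by
      have := List.nodup_iff_count_le_one.mp hPpath.isTrail.edges_nodup e
      have := List.count_pos_iff.mpr hePc
      omega
    obtain ⟨x, y, hxy, r1, r2, hse, _, _, hlen⟩ := edge_split P hcnt
    have heC : s(x, y) ∈ C.edges := by rw [hse]; exact he
    have hx : x ∈ C.toSubgraph.verts := by
      rw [SimpleGraph.Walk.mem_verts_toSubgraph]
      exact SimpleGraph.Walk.fst_mem_support_of_mem_edges C heC
    have hy : y ∈ C.toSubgraph.verts := by
      rw [SimpleGraph.Walk.mem_verts_toSubgraph]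
      exact SimpleGraph.Walk.snd_mem_support_of_mem_edges C heC
    have hr1 : G.dist u x ≤ r1.length := SimpleGraph.dist_le r1
    have hr2 : G.dist y w ≤ r2.length := SimpleGraph.dist_le r2
    have hr1lt : G.dist u x < n := by omega
    have hr2lt : G.dist y w < n := by omega
    have ih1 : C.toSubgraph.coe.dist ⟨u, hu⟩ ⟨x, hx⟩ ≤ G.dist u x :=
      ih (G.dist u x) hr1lt u x hu hx le_rfl
    have ih2 : C.toSubgraph.coe.dist ⟨y, hy⟩ ⟨w, hw⟩ ≤ G.dist y w :=
      ih (G.dist y w) hr2lt y w hy hw le_rfl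
    -- the edge e is an edge of the cycle subgraph
    have hadj : C.toSubgraph.Adj x y := by
      have : s(x, y) ∈ C.toSubgraph.edgeSet := (C.mem_edges_toSubgraph).mpr heC
      exact this
    have hadjcoe : C.toSubgraph.coe.Adj ⟨x, hx⟩ ⟨y, hy⟩ := hadj
    -- assemble walks in the coerced subgraph
    obtain ⟨W1, hW1⟩ :=
      (hconn.coe.preconnected ⟨u, hu⟩ ⟨x, hx⟩).exists_walk_length_eq_dist
    obtain ⟨W2, hW2⟩ :=
      (hconn.coe.preconnected ⟨y, hy⟩ ⟨w, hw⟩).exists_walk_length_eq_dist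
    have hbig := SimpleGraph.dist_le (W1.append (SimpleGraph.Walk.cons hadjcoe W2))
    rw [SimpleGraph.Walk.length_append, SimpleGraph.Walk.length_cons] at hbig
    omega
  · -- e not on the shortest path; rotate the cycle and split at w
    have hu' : u ∈ C.support := (C.mem_verts_toSubgraph).mp hu
    set C1 := C.rotate u hu' with hC1def
    have hC1 : C1.IsCycle := hC.rotate hu'
    have hC1sub : C1.toSubgraph = C.toSubgraph := C.toSubgraph_rotate hu'
    have hw1 : w ∈ C1.support := by
      rw [← SimpleGraph.Walk.mem_verts_toSubgraph, hC1sub]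
      exact hw
    set q1 := C1.takeUntil w hw1 with hq1def
    set q2 := C1.dropUntil w hw1 with hq2def
    have hspec : q1.append q2 = C1 := C1.take_spec hw1
    have hC1len : C1.length = C.length := by
      have h1 := congrArg SimpleGraph.Walk.length (C.take_spec hu')
      rw [SimpleGraph.Walk.length_append] at h1
      have h2 : C1.length =
          (C.dropUntil u hu').length + (C.takeUntil u hu').length := by
        rw [hC1def, SimpleGraph.Walk.rotate, SimpleGraph.Walk.length_append]
      omega
    have hsumlen : q1.length + q2.length = C.length := by
      have := congrArg SimpleGraph.Walk.length hspec
      rw [SimpleGraph.Walk.length_append] at this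
      omega
    have heC1 : e ∈ C1.edges := (C.rotate_edges u hu').perm.mem_iff.mpr he
    have hedges : C1.edges = q1.edges ++ q2.edges := by
      conv_lhs => rw [← hspec]
      exact SimpleGraph.Walk.edges_append _ _
    have hnodup : C1.edges.Nodup := hC1.edges_nodup
    rw [hedges] at hnodup heC1
    have hnd1 : q1.edges.Nodup := (List.nodup_append.mp hnodup).1
    have hnd2 : q2.edges.Nodup := (List.nodup_append.mp hnodup).2.1
    rw [List.mem_append] at heC1
    rw [← hPlen]
    cases heC1 with
    | inr he2 =>
      -- e on the arc q2 from w to u; the distance is realized along q1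
      have hcnt2 : List.count e q2.edges = 1 := by
        have := List.nodup_iff_count_le_one.mp hnd2 e
        have := List.count_pos_iff.mpr he2
        omega
      have hq1le : q1.length ≤ P.length :=
        arc_bound hmin q1 q2 hsumlen hcnt2 P hePc
      have hq1sub : q1.toSubgraph ≤ C.toSubgraph := by
        rw [← hC1sub, ← hspec, SimpleGraph.Walk.toSubgraph_append]
        exact le_sup_left
      calc C.toSubgraph.coe.dist ⟨u, hu⟩ ⟨w, hw⟩ ≤ q1.length :=
            dist_coe_le q1 hq1sub hu hw
        _ ≤ P.length := hq1le
    | inl he1 =>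
      -- e on the arc q1 from u to w; the distance is realized along q2.reverse
      have hcnt1 : List.count e q1.reverse.edges = 1 := by
        rw [SimpleGraph.Walk.edges_reverse, List.count_reverse]
        have := List.nodup_iff_count_le_one.mp hnd1 e
        have := List.count_pos_iff.mpr he1
        omega
      have hsum' : q2.reverse.length + q1.reverse.length = C.length := by
        rw [SimpleGraph.Walk.length_reverse, SimpleGraph.Walk.length_reverse]
        omega
      have hq2le : q2.reverse.length ≤ P.length :=
        arc_bound hmin q2.reverse q1.reverse hsum' hcnt1 P hePc
      have hq2sub : q2.reverse.toSubgraph ≤ C.toSubgraph := by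
        rw [SimpleGraph.Walk.toSubgraph_reverse, ← hC1sub, ← hspec,
          SimpleGraph.Walk.toSubgraph_append]
        exact le_sup_right
      calc C.toSubgraph.coe.dist ⟨u, hu⟩ ⟨w, hw⟩ ≤ q2.reverse.length :=
            dist_coe_le q2.reverse hq2sub hu hw
        _ ≤ P.length := hq2le

theorem smallest_cycle_through_edge_is_min_cycle {V : Type*} (G : SimpleGraph V)
    (a : V) (C : G.Walk a a) (hC : C.IsCycle) (e : Sym2 V) (he : e ∈ C.edges)
    (hmin : ∀ (b : V) (C' : G.Walk b b), C'.IsCycle → e ∈ C'.edges →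
      C.length ≤ C'.length) :
    ∀ (u w : V) (hu : u ∈ C.toSubgraph.verts) (hw : w ∈ C.toSubgraph.verts),
      C.toSubgraph.coe.dist ⟨u, hu⟩ ⟨w, hw⟩ = G.dist u w := by
  classical
  intro u w hu hw
  refine le_antisymm ?_ ?_
  · exact key_lemma G a C hC e he hmin (G.dist u w) u w hu hw le_rfl
  · have hconn : C.toSubgraph.Connected := C.toSubgraph_connected
    obtain ⟨q, hq⟩ :=
      (hconn.coe.preconnected ⟨u, hu⟩ ⟨w, hw⟩).exists_walk_length_eq_dist
    have := SimpleGraph.dist_le (q.map C.toSubgraph.hom)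
    rwa [SimpleGraph.Walk.length_map, hq] at this
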